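/- Let Θ be a topologically reasonable family of subsets of 2^ω. Then every set in Θ is Silver measurable if and only if for every X ∈ Θ there exists a Silver tree T with [T] ⊆ X or [T] ∩ X = ∅. -/

import Mathlib

/-- `T` is a tree of finite binary sequences: closed under initial segments. -/
def IsTree (T : Set (List Bool)) : Prop :=
  ∀ t ∈ T, ∀ k : ℕ, t.take k ∈ T

/-- `t` is a splitting node of `T`: it lies in `T` and both its one-bit extensions do. -/
def SplitNode (T : Set (List Bool)) (t : List Bool) : Prop :=
  t ∈ T ∧ t ++ [false] ∈ T ∧ t ++ [true] ∈ T

/-- `T` is a perfect tree: a nonempty tree in which every node extends to a splitting node. -/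
def IsPerfect (T : Set (List Bool)) : Prop :=
  IsTree T ∧ T.Nonempty ∧ ∀ t ∈ T, ∃ s, t <+: s ∧ SplitNode T s

/-- `T` is a Silver (uniform perfect) tree: perfect, and nodes of equal length
have the same one-bit extensions in `T`. -/
def IsSilver (T : Set (List Bool)) : Prop :=
  IsPerfect T ∧ ∀ s ∈ T, ∀ t ∈ T, s.length = t.length →
    ∀ i : Bool, (s ++ [i] ∈ T ↔ t ++ [i] ∈ T)

/-- The body `[T]` of a tree: all infinite branches whose finite initial
segments all lie in `T`. -/
def body (T : Set (List Bool)) : Set (ℕ → Bool) :=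
  { x | ∀ n : ℕ, (List.ofFn fun i : Fin n => x i) ∈ T }

/-- `X ⊆ 2^ω` is Silver measurable: inside every Silver tree there is a Silver
subtree whose body is contained in `X` or disjoint from `X`. -/
def SilverMeasurable (X : Set (ℕ → Bool)) : Prop :=
  ∀ T : Set (List Bool), IsSilver T →
    ∃ T' : Set (List Bool), IsSilver T' ∧ T' ⊆ T ∧ (body T' ⊆ X ∨ body T' ∩ X = ∅)

/-- A family of subsets of Cantor space is topologically reasonable if it is closed
under continuous preimages and under intersections with closed sets. -/
def TopReasonable (Θ : Set (Set (ℕ → Bool))) : Prop :=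
  (∀ X ∈ Θ, ∀ f : (ℕ → Bool) → (ℕ → Bool), Continuous f → f ⁻¹' X ∈ Θ) ∧
  (∀ X ∈ Θ, ∀ C : Set (ℕ → Bool), IsClosed C → X ∩ C ∈ Θ)

/-- The tree of sequences that agree with `g` off `A`. -/
def seqTree (A : Set ℕ) (g : ℕ → Bool) : Set (List Bool) :=
  {t | ∀ n, (hn : n < t.length) → n ∉ A → t[n]'hn = g n}

lemma mem_seqTree_append {A : Set ℕ} {g : ℕ → Bool} {t : List Bool} {b : Bool} :
    t ++ [b] ∈ seqTree A g ↔ t ∈ seqTree A g ∧ (t.length ∉ A → b = g t.length) := by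
  constructor
  · intro h
    refine ⟨fun n hn hA => ?_, fun hA => ?_⟩
    · have h2 := h n (by simp; omega) hA
      rwa [List.getElem_append_left hn] at h2
    · have h2 := h t.length (by simp) hA
      simpa using h2
  · rintro ⟨h1, h2⟩ n hn hA
    simp only [List.length_append, List.length_singleton] at hn
    rcases Nat.lt_or_ge n t.length with h' | h'
    · rw [List.getElem_append_left h']
      exact h1 n h' hA
    · have hn' : n = t.length := by omega
      subst hn'
      simpa using h2 hA

lemma body_seqTree {A : Set ℕ} {g : ℕ → Bool} :
    body (seqTree A g) = {x | ∀ n ∉ A, x n = g n} := by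
  ext x
  constructor
  · intro h n hn
    have h2 := h (n + 1) n (by simp) hn
    rw [List.getElem_ofFn] at h2
    simpa using h2
  · intro h n m hm hA
    simp only [List.length_ofFn] at hm
    simpa using h m hA

lemma seqTree_isTree {A : Set ℕ} {g : ℕ → Bool} : IsTree (seqTree A g) := by
  intro t ht k n hn hA
  have hn2 : n < t.length := by simp [List.length_take] at hn; omega
  rw [List.getElem_take]
  exact ht n hn2 hA

lemma isSilver_seqTree {A : Set ℕ} {g : ℕ → Bool} (hA : ∀ m, ∃ n, n ∈ A ∧ m ≤ n) :
    IsSilver (seqTree A g) := by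
  refine ⟨⟨seqTree_isTree, ⟨[], by intro n hn; simp at hn⟩, ?_⟩, ?_⟩
  · intro t ht
    obtain ⟨m, hmA, hm⟩ := hA t.length
    have hsT : t ++ List.ofFn (fun i : Fin (m - t.length) => g (t.length + i)) ∈ seqTree A g := by
      intro n hn hnA
      rcases Nat.lt_or_ge n t.length with h' | h'
      · rw [List.getElem_append_left h']
        exact ht n h' hnA
      · rw [List.getElem_append_right h']
        simp only [List.getElem_ofFn]
        congr 1
        omega
    have hlen : (t ++ List.ofFn (fun i : Fin (m - t.length) => g (t.length + i))).length = m := by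
      simp; omega
    refine ⟨_, ⟨_, rfl⟩, hsT, ?_, ?_⟩ <;>
      exact mem_seqTree_append.2 ⟨hsT, fun h => absurd (hlen.symm ▸ hmA) h⟩
  · intro s hsT t htT hlen i
    rw [mem_seqTree_append, mem_seqTree_append, hlen]
    tauto

open Classical in
lemma silver_structure {T : Set (List Bool)} (hT : IsSilver T) :
    ∃ A g, (∀ m, ∃ n, n ∈ A ∧ m ≤ n) ∧ T = seqTree A g := by
  obtain ⟨⟨htree, ⟨t₀, ht₀⟩, hperf⟩, hunif⟩ := hT
  have hnil : [] ∈ T := by simpa using htree t₀ ht₀ 0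
  -- every node has an immediate extension
  have hstep : ∀ t ∈ T, ∃ b : Bool, t ++ [b] ∈ T := by
    intro t ht
    obtain ⟨s, ⟨u, rfl⟩, hsT, hsf, hst⟩ := hperf t ht
    cases u with
    | nil => exact ⟨false, by simpa using hsf⟩
    | cons b u' =>
      refine ⟨b, ?_⟩
      have h2 := htree _ hsT (t.length + 1)
      rw [List.take_append, List.take_of_length_le (by omega), Nat.add_sub_cancel_left] at h2
      simpa using h2
  have hlevel : ∀ n, ∃ t ∈ T, t.length = n := by
    intro n
    induction n with
    | zero => exact ⟨[], hnil, rfl⟩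
    | succ n ih =>
      obtain ⟨t, ht, rfl⟩ := ih
      obtain ⟨b, hb⟩ := hstep t ht
      exact ⟨t ++ [b], hb, by simp⟩
  refine ⟨{n | ∃ s, s ∈ T ∧ s.length = n ∧ SplitNode T s},
    fun n => if ∃ t, t ∈ T ∧ t.length = n ∧ t ++ [true] ∈ T then true else false, ?_, ?_⟩
  · intro m
    obtain ⟨t, ht, hlen⟩ := hlevel m
    obtain ⟨s, ⟨u, rfl⟩, hsp⟩ := hperf t ht
    exact ⟨(t ++ u).length, ⟨t ++ u, hsp.1, rfl, hsp⟩, by simp; omega⟩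
  · -- extension characterization
    have hext : ∀ t ∈ T, ∀ i : Bool,
        (t ++ [i] ∈ T ↔ ((∃ s, s ∈ T ∧ s.length = t.length ∧ SplitNode T s) ∨
          i = if ∃ u, u ∈ T ∧ u.length = t.length ∧ u ++ [true] ∈ T then true else false)) := by
      intro t ht i
      constructor
      · intro hti
        by_cases hA : ∃ s, s ∈ T ∧ s.length = t.length ∧ SplitNode T s
        · exact Or.inl hA
        · right
          cases i with
          | true => rw [if_pos ⟨t, ht, rfl, hti⟩]
          | false =>
            rw [if_neg]
            rintro ⟨u, huT, hulen, hut⟩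
            have htt : t ++ [true] ∈ T := (hunif u huT t ht hulen true).1 hut
            exact hA ⟨t, ht, rfl, ht, hti, htt⟩
      · rintro (⟨s, hsT, hslen, _, hsf, hst⟩ | rfl)
        · cases i with
          | false => exact (hunif t ht s hsT hslen.symm false).2 hsf
          | true => exact (hunif t ht s hsT hslen.symm true).2 hst
        · obtain ⟨b, hb⟩ := hstep t ht
          by_cases hA : ∃ u, u ∈ T ∧ u.length = t.length ∧ u ++ [true] ∈ T
          · rw [if_pos hA]
            obtain ⟨u, huT, hulen, hut⟩ := hA
            exact (hunif u huT t ht hulen true).1 hut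
          · rw [if_neg hA]
            cases b with
            | false => exact hb
            | true => exact absurd ⟨t, ht, rfl, hb⟩ hA
    ext t
    constructor
    · intro ht n hn hnA
      have h1 : t.take n ∈ T := htree t ht n
      have h2 : t.take (n + 1) ∈ T := htree t ht (n + 1)
      have he : t.take (n + 1) = t.take n ++ [t[n]'hn] := by
        rw [List.take_succ, List.getElem?_eq_getElem hn]
        rfl
      rw [he] at h2
      have hlen : (t.take n).length = n := by simp; omega
      have h3 := (hext (t.take n) h1 (t[n]'hn)).1 h2
      rw [hlen] at h3
      rcases h3 with h3 | h3
      · exact absurd h3 hnA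
      · exact h3
    · intro ht
      revert ht
      induction t using List.reverseRecOn with
      | nil => intro _; exact hnil
      | append_singleton u b ih =>
        intro h
        obtain ⟨hu, hb⟩ := mem_seqTree_append.1 h
        have huT := ih hu
        refine (hext u huT b).2 ?_
        by_cases hA : ∃ s, s ∈ T ∧ s.length = u.length ∧ SplitNode T s
        · exact Or.inl hA
        · exact Or.inr (hb hA)

section
open Classical

/-- For a topologically reasonable family `Θ`, every set in `Θ` is Silver measurable
iff for every `X ∈ Θ` there is a single Silver tree whose body is contained in `X`
or disjoint from `X`. -/
theorem silverMeasurable_iff_global (Θ : Set (Set (ℕ → Bool)))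
    (hΘ : TopReasonable Θ) :
    (∀ X ∈ Θ, SilverMeasurable X) ↔
      (∀ X ∈ Θ, ∃ T : Set (List Bool), IsSilver T ∧
        (body T ⊆ X ∨ body T ∩ X = ∅)) := by
  constructor
  · intro h X hX
    obtain ⟨T', hT', _, hc⟩ := h X hX (seqTree Set.univ (fun _ => false))
      (isSilver_seqTree fun m => ⟨m, trivial, le_rfl⟩)
    exact ⟨T', hT', hc⟩
  · intro hglob X hX T hT
    obtain ⟨A, g, hA, rfl⟩ := silver_structure hT
    have hinf : {n | n ∈ A}.Infinite := by
      apply Set.infinite_of_not_bddAbove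
      rintro ⟨m, hm⟩
      obtain ⟨n, hnA, hn⟩ := hA (m + 1)
      have := hm hnA
      omega
    set p : ℕ → Prop := fun n => n ∈ A with hp
    have hinf' : (setOf p).Infinite := hinf
    set e : ℕ → ℕ := Nat.nth p with he
    set c : ℕ → ℕ := Nat.count p with hc
    have heA : ∀ k, e k ∈ A := Nat.nth_mem_of_infinite hinf'
    have hce : ∀ k, c (e k) = k := Nat.count_nth_of_infinite hinf'
    have hec : ∀ n, n ∈ A → e (c n) = n := fun n hn => Nat.nth_count hn
    set f : (ℕ → Bool) → (ℕ → Bool) := fun x n => if n ∈ A then x (c n) else g n with hf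
    have hfc : Continuous f := by
      apply continuous_pi
      intro n
      by_cases h : n ∈ A
      · simpa [hf, h] using continuous_apply (c n)
      · simpa [hf, h] using (continuous_const : Continuous fun _ : ℕ → Bool => g n)
    obtain ⟨S, hS, hcase⟩ := hglob _ (hΘ.1 X hX f hfc)
    obtain ⟨B, gB, hB, rfl⟩ := silver_structure hS
    set A' : Set ℕ := e '' B with hA'
    set g' : ℕ → Bool := fun n => if n ∈ A then gB (c n) else g n with hg'
    have hA'sub : ∀ n ∈ A', n ∈ A := by rintro n ⟨k, _, rfl⟩; exact heA k
    have hkey : body (seqTree A' g') = f '' body (seqTree B gB) := by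
      rw [body_seqTree, body_seqTree]
      ext y
      constructor
      · intro hy
        refine ⟨fun k => y (e k), fun k hk => ?_, ?_⟩
        · have h1 : e k ∉ A' := by
            rintro ⟨k', hk', hek⟩
            exact hk (Nat.nth_injective hinf' hek ▸ hk')
          have h2 := hy (e k) h1
          show y (e k) = gB k
          rw [h2]
          simp [hg', heA k, hce k]
        · funext n
          by_cases h : n ∈ A
          · simp only [hf, h, if_pos]
            rw [hec n h]
          · have hn' : n ∉ A' := fun h' => h (hA'sub n h')
            have h3 := hy n hn'
            have h4 : g' n = g n := by simp [hg', h]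
            simp [hf, h, h3, h4]
      · rintro ⟨x, hx, rfl⟩ n hn
        by_cases h : n ∈ A
        · have hcB : c n ∉ B := fun hcB => hn ⟨c n, hcB, hec n h⟩
          simp only [hf, hg', h, if_pos]
          exact hx (c n) hcB
        · simp only [hf, hg', h, if_neg, not_false_iff]
    refine ⟨seqTree A' g', isSilver_seqTree ?_, ?_, ?_⟩
    · intro m
      obtain ⟨k, hk, hmk⟩ := hB m
      refine ⟨e k, ⟨k, hk, rfl⟩, ?_⟩
      exact le_trans hmk (Nat.le_nth fun hfin => absurd hfin hinf')
    · intro t ht n hn hnA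
      have hn' : n ∉ A' := fun h' => hnA (hA'sub n h')
      rw [ht n hn hn']
      simp [hg', hnA]
    · rcases hcase with hc1 | hc1
      · left
        rw [hkey]
        rintro y ⟨x, hx, rfl⟩
        exact hc1 hx
      · right
        rw [hkey]
        rw [Set.eq_empty_iff_forall_notMem] at hc1 ⊢
        rintro y ⟨⟨x, hx, rfl⟩, hyX⟩
        exact hc1 x ⟨hx, hyX⟩

end
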